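/- The vector fields X_e = ∂_{ζ^0} + 𝜁̃_0 ∂_σ, X_f (the explicit vector field with components as given below), and X_h = 2ζ^0 ∂_{ζ^0} + ζ^a ∂_{ζ^a} - 𝜁̃_0 ∂_{𝜁̃_0} + σ ∂_σ + ρ ∂_ρ - t^a ∂_{t^a} - b^a ∂_{b^a} on the manifold 𝑁̄ with type IIA coordinates satisfy the commutation relations [X_e, X_f] = -X_h, [X_h, X_e] = -2 X_e, [X_h, X_f] = 2 X_f. Here X_f = (2ρh⁻¹ - (ζ^0)²)∂_{ζ^0} + (2ρh⁻¹b^a - ζ^0ζ^a)∂_{ζ^a} + (k_{abc}/2)(ζ^bζ^c - 2b^bb^cρh⁻¹)∂_{𝜁̃_a} + ((1/2)(σ + ζ^i𝜁̃_i) + (k_{abc}/3)ρh⁻¹b^ab^bb^c)∂_{𝜁̃_0} + ζ^0 t^a ∂_{t^a} + (ζ^0 b^a - ζ^a)∂_{b^a} - ζ^0 ρ ∂_ρ + [2ρh⁻¹(-𝜁̃_0 - b^a𝜁̃_a - k_{abc}((b^ab^bζ^c)/2 - (b^ab^bb^cζ^0)/6)) - (ζ^0/2)(σ - 𝜁̃_iζ^i)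 + (k_{abc}/6)ζ^aζ^bζ^c]∂_σ, where h = h(t) = (1/6)k_{abc}t^at^bt^c. -/

import Mathlib

open Finset

noncomputable section

/-- the coordinate space of `𝑁̄` in type IIA variables:
`(b, t, ρ, ζ⁰, ζᵃ, ζ̃₀, ζ̃ₐ, σ)`. -/
abbrev QSpace (n : ℕ) :=
  (Fin n → ℝ) × (Fin n → ℝ) × ℝ × ℝ × (Fin n → ℝ) × ℝ × (Fin n → ℝ) × ℝ

/-- the cubic polynomial `h(t) = (1/6) k_{abc} tᵃ tᵇ tᶜ`. -/
def cubic {n : ℕ} (k : Fin n → Fin n → Fin n → ℝ) (t : Fin n → ℝ) : ℝ :=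
  (1/6) * ∑ a, ∑ b, ∑ c, k a b c * t a * t b * t c

/-- Lie bracket of vector fields on `QSpace n` in coordinates:
`[X,Y](p) = DY(p)[X(p)] - DX(p)[Y(p)]`. -/
def VLie {n : ℕ} (X Y : QSpace n → QSpace n) : QSpace n → QSpace n :=
  fun p => fderiv ℝ Y p (X p) - fderiv ℝ X p (Y p)

/-- `X_e = ∂_{ζ⁰} + ζ̃₀ ∂_σ`. -/
def Xe {n : ℕ} : QSpace n → QSpace n :=
  fun (_, _, _, _, _, ζt₀, _, _) => (0, 0, 0, 1, 0, 0, 0, ζt₀)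

/-- `X_h = 2ζ⁰∂_{ζ⁰} + ζᵃ∂_{ζᵃ} - ζ̃₀∂_{ζ̃₀} + σ∂_σ + ρ∂_ρ - tᵃ∂_{tᵃ} - bᵃ∂_{bᵃ}`. -/
def Xh {n : ℕ} : QSpace n → QSpace n :=
  fun (b, t, ρ, ζ₀, ζ, ζt₀, _, σ) =>
    (-b, -t, ρ, 2*ζ₀, ζ, -ζt₀, 0, σ)

/-- the "hidden" S-duality vector field `X_f` in type IIA variables. -/
def Xf {n : ℕ} (k : Fin n → Fin n → Fin n → ℝ) : QSpace n → QSpace n :=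
  fun (b, t, ρ, ζ₀, ζ, ζt₀, ζt, σ) =>
    (fun a => ζ₀ * b a - ζ a,
     fun a => ζ₀ * t a,
     -ζ₀ * ρ,
     2*ρ/cubic k t - ζ₀^2,
     fun a => 2*ρ/cubic k t * b a - ζ₀ * ζ a,
     (1/2)*(σ + (ζ₀*ζt₀ + ∑ a, ζ a * ζt a))
       + (ρ/cubic k t) * (1/3) * ∑ a, ∑ b', ∑ c, k a b' c * b a * b b' * b c,
     fun a => (1/2) * ∑ b', ∑ c, k a b' c * (ζ b' * ζ c - 2 * b b' * b c * ρ/cubic k t),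
     2*ρ/cubic k t *
        (-ζt₀ - (∑ a, b a * ζt a)
          - ∑ a, ∑ b', ∑ c, k a b' c *
              (b a * b b' * ζ c/2 - b a * b b' * b c * ζ₀/6))
       - ζ₀/2 * (σ - (ζ₀*ζt₀ + ∑ a, ζ a * ζt a))
       + (1/6) * ∑ a, ∑ b', ∑ c, k a b' c * ζ a * ζ b' * ζ c)


theorem hd_congr {F : Type*} [NormedAddCommGroup F] [NormedSpace ℝ F]
    {f : ℝ → F} {x : ℝ} {e e' : F} (h : HasDerivAt f e x) (he : e' = e) :
    HasDerivAt f e' x := he ▸ h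

theorem linDeriv (c m : ℝ) : HasDerivAt (fun s : ℝ => c + s * m) m 0 := by
  simpa using ((hasDerivAt_id (0:ℝ)).mul_const m).const_add c

@[fun_prop]
lemma cubic_diff {n : ℕ} (k : Fin n → Fin n → Fin n → ℝ) : Differentiable ℝ (cubic k) := by
  unfold cubic; fun_prop

theorem fderiv_apply_eq {n : ℕ} {f : QSpace n → QSpace n} {p v E : QSpace n}
    (hf : DifferentiableAt ℝ f p) (h : HasDerivAt (fun s : ℝ => f (p + s • v)) E 0) :
    fderiv ℝ f p v = E := by
  have hc : HasDerivAt (fun s : ℝ => p + s • v) v 0 := by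
    simpa using ((hasDerivAt_id (0:ℝ)).smul_const v).const_add p
  have hl : HasFDerivAt f (fderiv ℝ f p) ((fun s : ℝ => p + s • v) 0) := by
    simpa using hf.hasFDerivAt
  exact (HasFDerivAt.comp_hasDerivAt 0 hl hc).unique h


set_option maxHeartbeats 2000000 in
/-- the infinitesimal S-duality vector fields `X_e`, `X_f`, `X_h`
satisfy `[X_e,X_f] = -X_h`, `[X_h,X_e] = -2X_e`, `[X_h,X_f] = 2X_f`
(on the locus where `h(t) > 0`), i.e. they span a subalgebra anti-isomorphic
to `𝔰𝔩(2,ℝ)`. -/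
theorem stmt_7 {n : ℕ} (k : Fin n → Fin n → Fin n → ℝ)
    (hsymm : ∀ a b c, k a b c = k b a c ∧ k a b c = k a c b) :
    ∀ p : QSpace n, 0 < cubic k p.2.1 →
      VLie Xe (Xf k) p = -Xh p ∧
      VLie Xh Xe p = (-2 : ℝ) • Xe p ∧
      VLie Xh (Xf k) p = (2 : ℝ) • Xf k p := by
  rintro ⟨b, t, r, z0, z, w0, w, sg⟩ hp
  have hH0 : cubic k t ≠ 0 := ne_of_gt hp
  have hXfdiff : DifferentiableAt ℝ (Xf k) (b, t, r, z0, z, w0, w, sg) := by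
    unfold Xf; simp only [div_eq_mul_inv]; fun_prop (disch := exact hH0)
  have ht1 : t + (0:ℝ) • (0:Fin n → ℝ) = t := by simp
  have hne1 : cubic k (t + (0:ℝ) • (0:Fin n → ℝ)) ≠ 0 := by simpa using hH0
  have hH1 : HasDerivAt (fun s : ℝ => cubic k (t + s • (0:Fin n → ℝ))) 0 0 := by
    have leaf : ∀ a b' c : Fin n, HasDerivAt (fun s : ℝ =>
        k a b' c * (t a + s * 0) * (t b' + s * 0) * (t c + s * 0)) 0 0 := fun a b' c =>
      hd_congr ((((hasDerivAt_const 0 (k a b' c)).fun_mul (linDeriv (t a) 0)).fun_mul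
        (linDeriv (t b') 0)).fun_mul (linDeriv (t c) 0)) (by ring)
    exact hd_congr ((HasDerivAt.fun_sum fun a _ => HasDerivAt.fun_sum fun b' _ =>
      HasDerivAt.fun_sum fun c _ => leaf a b' c).const_mul (1/6)) (by simp)
  have hsumzw1 : HasDerivAt (fun s : ℝ => ∑ a, (z a + s * 0) * (w a + s * 0)) 0 0 := by
    have leaf : ∀ a : Fin n, HasDerivAt (fun s : ℝ => (z a + s * 0) * (w a + s * 0)) 0 0 :=
      fun a => hd_congr ((linDeriv (z a) 0).fun_mul (linDeriv (w a) 0)) (by ring)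
    exact hd_congr (HasDerivAt.fun_sum fun a _ => leaf a) (by simp)
  have hsumbw1 : HasDerivAt (fun s : ℝ => ∑ a, (b a + s * 0) * (w a + s * 0)) 0 0 := by
    have leaf : ∀ a : Fin n, HasDerivAt (fun s : ℝ => (b a + s * 0) * (w a + s * 0)) 0 0 :=
      fun a => hd_congr ((linDeriv (b a) 0).fun_mul (linDeriv (w a) 0)) (by ring)
    exact hd_congr (HasDerivAt.fun_sum fun a _ => leaf a) (by simp)
  have hS3b1 : HasDerivAt (fun s : ℝ => ∑ a, ∑ b', ∑ c,
      k a b' c * (b a + s * 0) * (b b' + s * 0) * (b c + s * 0)) 0 0 := by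
    have leaf : ∀ a b' c : Fin n, HasDerivAt (fun s : ℝ =>
        k a b' c * (b a + s * 0) * (b b' + s * 0) * (b c + s * 0)) 0 0 := fun a b' c =>
      hd_congr ((((hasDerivAt_const 0 (k a b' c)).fun_mul (linDeriv (b a) 0)).fun_mul
        (linDeriv (b b') 0)).fun_mul (linDeriv (b c) 0)) (by ring)
    exact hd_congr (HasDerivAt.fun_sum fun a _ => HasDerivAt.fun_sum fun b' _ =>
      HasDerivAt.fun_sum fun c _ => leaf a b' c) (by simp)
  have hS3z1 : HasDerivAt (fun s : ℝ => ∑ a, ∑ b', ∑ c,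
      k a b' c * (z a + s * 0) * (z b' + s * 0) * (z c + s * 0)) 0 0 := by
    have leaf : ∀ a b' c : Fin n, HasDerivAt (fun s : ℝ =>
        k a b' c * (z a + s * 0) * (z b' + s * 0) * (z c + s * 0)) 0 0 := fun a b' c =>
      hd_congr ((((hasDerivAt_const 0 (k a b' c)).fun_mul (linDeriv (z a) 0)).fun_mul
        (linDeriv (z b') 0)).fun_mul (linDeriv (z c) 0)) (by ring)
    exact hd_congr (HasDerivAt.fun_sum fun a _ => HasDerivAt.fun_sum fun b' _ =>
      HasDerivAt.fun_sum fun c _ => leaf a b' c) (by simp)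
  have hMix1 : HasDerivAt (fun s : ℝ => ∑ a, ∑ b', ∑ c, k a b' c *
      ((b a + s * 0) * (b b' + s * 0) * (z c + s * 0)/2
        - (b a + s * 0) * (b b' + s * 0) * (b c + s * 0) * (z0 + s * 1)/6))
      (-(1/6) * ∑ a, ∑ b', ∑ c, k a b' c * b a * b b' * b c) 0 := by
    have leaf : ∀ a b' c : Fin n, HasDerivAt (fun s : ℝ => k a b' c *
        ((b a + s * 0) * (b b' + s * 0) * (z c + s * 0)/2
          - (b a + s * 0) * (b b' + s * 0) * (b c + s * 0) * (z0 + s * 1)/6))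
        (-(1/6) * (k a b' c * b a * b b' * b c)) 0 := fun a b' c =>
      hd_congr ((hasDerivAt_const 0 (k a b' c)).fun_mul
        (((((linDeriv (b a) 0).fun_mul (linDeriv (b b') 0)).fun_mul (linDeriv (z c) 0)).div_const 2).fun_sub
         (((((linDeriv (b a) 0).fun_mul (linDeriv (b b') 0)).fun_mul (linDeriv (b c) 0)).fun_mul
            (linDeriv z0 1)).div_const 6))) (by ring)
    exact hd_congr (HasDerivAt.fun_sum fun a _ => HasDerivAt.fun_sum fun b' _ =>
      HasDerivAt.fun_sum fun c _ => leaf a b' c) (by simp only [← Finset.mul_sum])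
  have h1c1 : ∀ a : Fin n, HasDerivAt (fun s : ℝ =>
      (z0 + s * 1) * (b a + s * 0) - (z a + s * 0)) (b a) 0 := fun a =>
    hd_congr (((linDeriv z0 1).fun_mul (linDeriv (b a) 0)).fun_sub (linDeriv (z a) 0)) (by ring)
  have h1c2 : ∀ a : Fin n, HasDerivAt (fun s : ℝ => (z0 + s * 1) * (t a + s * 0)) (t a) 0 :=
    fun a => hd_congr ((linDeriv z0 1).fun_mul (linDeriv (t a) 0)) (by ring)
  have h1c3 : HasDerivAt (fun s : ℝ => -(z0 + s * 1) * (r + s * 0)) (-r) 0 :=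
    hd_congr (((linDeriv z0 1).fun_neg).fun_mul (linDeriv r 0)) (by ring)
  have h1c4 : HasDerivAt (fun s : ℝ =>
      2*(r + s * 0)/cubic k (t + s • (0:Fin n → ℝ)) - (z0 + s * 1)^2) (-(2*z0)) 0 :=
    hd_congr ((((hasDerivAt_const 0 2).fun_mul (linDeriv r 0)).fun_div hH1 hne1).fun_sub
      ((linDeriv z0 1).fun_pow 2)) (by
        simp only [ht1]
        norm_num)
  have h1c5 : ∀ a : Fin n, HasDerivAt (fun s : ℝ =>
      2*(r + s * 0)/cubic k (t + s • (0:Fin n → ℝ)) * (b a + s * 0)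
        - (z0 + s * 1) * (z a + s * 0)) (-(z a)) 0 := fun a =>
    hd_congr (((((hasDerivAt_const 0 2).fun_mul (linDeriv r 0)).fun_div hH1 hne1).fun_mul
      (linDeriv (b a) 0)).fun_sub ((linDeriv z0 1).fun_mul (linDeriv (z a) 0))) (by
        simp only [ht1]
        field_simp
        ring)
  have h1c6 : HasDerivAt (fun s : ℝ =>
      (1/2)*((sg + s * w0) + ((z0 + s * 1)*(w0 + s * 0) + ∑ a, (z a + s * 0) * (w a + s * 0)))
        + ((r + s * 0)/cubic k (t + s • (0:Fin n → ℝ))) * (1/3) * ∑ a, ∑ b', ∑ c,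
            k a b' c * (b a + s * 0) * (b b' + s * 0) * (b c + s * 0)) w0 0 :=
    hd_congr ((((linDeriv sg w0).fun_add (((linDeriv z0 1).fun_mul (linDeriv w0 0)).fun_add
      hsumzw1)).const_mul (1/2)).fun_add
      ((((linDeriv r 0).fun_div hH1 hne1).mul_const (1/3)).fun_mul hS3b1)) (by
        simp only [ht1, zero_mul, mul_zero, add_zero, zero_add, mul_one, one_mul]
        try field_simp
        try ring)
  have h1c7 : ∀ a : Fin n, HasDerivAt (fun s : ℝ =>
      (1/2) * ∑ b', ∑ c, k a b' c * ((z b' + s * 0) * (z c + s * 0)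
        - 2 * (b b' + s * 0) * (b c + s * 0) * (r + s * 0)/cubic k (t + s • (0:Fin n → ℝ))))
      0 0 := by
    intro a
    have leaf : ∀ b' c : Fin n, HasDerivAt (fun s : ℝ =>
        k a b' c * ((z b' + s * 0) * (z c + s * 0)
          - 2 * (b b' + s * 0) * (b c + s * 0) * (r + s * 0)/cubic k (t + s • (0:Fin n → ℝ))))
        0 0 := fun b' c =>
      hd_congr ((hasDerivAt_const 0 (k a b' c)).fun_mul (((linDeriv (z b') 0).fun_mul
        (linDeriv (z c) 0)).fun_sub (((((hasDerivAt_const 0 2).fun_mul (linDeriv (b b') 0)).fun_mul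
          (linDeriv (b c) 0)).fun_mul (linDeriv r 0)).fun_div hH1 hne1))) (by
            simp only [ht1]
            field_simp
            ring)
    exact hd_congr ((HasDerivAt.fun_sum fun b' _ => HasDerivAt.fun_sum fun c _ =>
      leaf b' c).const_mul (1/2)) (by simp)
  have h1c8 : HasDerivAt (fun s : ℝ =>
      2*(r + s * 0)/cubic k (t + s • (0:Fin n → ℝ)) *
        (-(w0 + s * 0) - (∑ a, (b a + s * 0) * (w a + s * 0))
          - ∑ a, ∑ b', ∑ c, k a b' c *
              ((b a + s * 0) * (b b' + s * 0) * (z c + s * 0)/2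
                - (b a + s * 0) * (b b' + s * 0) * (b c + s * 0) * (z0 + s * 1)/6))
        - (z0 + s * 1)/2 * ((sg + s * w0) - ((z0 + s * 1)*(w0 + s * 0)
            + ∑ a, (z a + s * 0) * (w a + s * 0)))
        + (1/6) * ∑ a, ∑ b', ∑ c, k a b' c * (z a + s * 0) * (z b' + s * 0) * (z c + s * 0))
      (2*r/cubic k t * ((1/6) * ∑ a, ∑ b', ∑ c, k a b' c * b a * b b' * b c)
        - (1/2)*(sg - (z0*w0 + ∑ a, z a * w a))) 0 := by
    have hfrac : HasDerivAt (fun s : ℝ => 2*(r + s * 0)/cubic k (t + s • (0:Fin n → ℝ))) 0 0 :=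
      hd_congr (((hasDerivAt_const 0 2).fun_mul (linDeriv r 0)).fun_div hH1 hne1) (by
        simp only [ht1]; field_simp; ring)
    have hG : HasDerivAt (fun s : ℝ => -(w0 + s * 0) - (∑ a, (b a + s * 0) * (w a + s * 0))
        - ∑ a, ∑ b', ∑ c, k a b' c *
            ((b a + s * 0) * (b b' + s * 0) * (z c + s * 0)/2
              - (b a + s * 0) * (b b' + s * 0) * (b c + s * 0) * (z0 + s * 1)/6))
        ((1/6) * ∑ a, ∑ b', ∑ c, k a b' c * b a * b b' * b c) 0 :=
      hd_congr ((((linDeriv w0 0).fun_neg).fun_sub hsumbw1).fun_sub hMix1) (by ring)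
    have hT2 : HasDerivAt (fun s : ℝ => (z0 + s * 1)/2 * ((sg + s * w0)
        - ((z0 + s * 1)*(w0 + s * 0) + ∑ a, (z a + s * 0) * (w a + s * 0))))
        ((1/2)*(sg - (z0*w0 + ∑ a, z a * w a))) 0 :=
      hd_congr (((linDeriv z0 1).div_const 2).fun_mul ((linDeriv sg w0).fun_sub
        (((linDeriv z0 1).fun_mul (linDeriv w0 0)).fun_add hsumzw1))) (by
          simp only [zero_mul, mul_zero, add_zero, zero_add, mul_one, one_mul]
          ring)
    exact hd_congr (((hfrac.fun_mul hG).fun_sub hT2).fun_add (hS3z1.const_mul (1/6))) (by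
      simp only [ht1, zero_mul, mul_zero, add_zero, zero_add, mul_one, one_mul]
      try field_simp
      try ring)
  have hXfe : fderiv ℝ (Xf k) (b, t, r, z0, z, w0, w, sg) (Xe (b, t, r, z0, z, w0, w, sg))
      = ((fun a => b a), (fun a => t a), -r, -(2*z0), (fun a => -(z a)), w0,
         (fun _ => (0:ℝ)),
         2*r/cubic k t * ((1/6) * ∑ a, ∑ b', ∑ c, k a b' c * b a * b b' * b c)
           - (1/2)*(sg - (z0*w0 + ∑ a, z a * w a))) :=
    fderiv_apply_eq hXfdiff (by
      exact (hasDerivAt_pi.mpr h1c1).prodMk ((hasDerivAt_pi.mpr h1c2).prodMk (h1c3.prodMk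
        (h1c4.prodMk ((hasDerivAt_pi.mpr h1c5).prodMk (h1c6.prodMk
        ((hasDerivAt_pi.mpr h1c7).prodMk h1c8)))))))
  have hXediff : DifferentiableAt ℝ (Xe (n := n)) (b, t, r, z0, z, w0, w, sg) := by
    unfold Xe; fun_prop
  have hfdXe : ∀ v : QSpace n, fderiv ℝ Xe (b, t, r, z0, z, w0, w, sg) v
      = ((0:Fin n → ℝ), (0:Fin n → ℝ), (0:ℝ), (0:ℝ), (0:Fin n → ℝ), (0:ℝ), (0:Fin n → ℝ), v.2.2.2.2.2.1) :=
    fun v => fderiv_apply_eq hXediff (by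
      exact (hasDerivAt_const _ _).prodMk ((hasDerivAt_const _ _).prodMk ((hasDerivAt_const _ _).prodMk
        ((hasDerivAt_const _ _).prodMk ((hasDerivAt_const _ _).prodMk ((hasDerivAt_const _ _).prodMk
        ((hasDerivAt_const _ _).prodMk (linDeriv w0 v.2.2.2.2.2.1))))))))
  have goal1 : VLie Xe (Xf k) (b, t, r, z0, z, w0, w, sg) = -Xh (b, t, r, z0, z, w0, w, sg) := by
    simp only [VLie]
    rw [hXfe, hfdXe]
    simp only [Xf, Xh]
    refine Prod.ext ?_ (Prod.ext ?_ (Prod.ext ?_ (Prod.ext ?_ (Prod.ext ?_ (Prod.ext ?_ (Prod.ext ?_ ?_))))))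
    · funext a; simp
    · funext a; simp
    · simp
    · simp
    · funext a; simp
    · simp
    · funext a; simp
    · show _ - _ = -sg
      simp only []
      field_simp
      ring
  have hXhdiff : DifferentiableAt ℝ (Xh (n := n)) (b, t, r, z0, z, w0, w, sg) := by
    unfold Xh; fun_prop
  have hfdXh : ∀ v : QSpace n, fderiv ℝ Xh (b, t, r, z0, z, w0, w, sg) v
      = (-v.1, -v.2.1, v.2.2.1, 2*v.2.2.2.1, v.2.2.2.2.1, -v.2.2.2.2.2.1, (0:Fin n → ℝ), v.2.2.2.2.2.2.2) :=
    fun v => fderiv_apply_eq hXhdiff (by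
      exact (hasDerivAt_pi.mpr fun a => (linDeriv (b a) (v.1 a)).fun_neg).prodMk
        ((hasDerivAt_pi.mpr fun a => (linDeriv (t a) (v.2.1 a)).fun_neg).prodMk
        ((linDeriv r v.2.2.1).prodMk
        (((linDeriv z0 v.2.2.2.1).const_mul 2).prodMk
        ((hasDerivAt_pi.mpr fun a => linDeriv (z a) (v.2.2.2.2.1 a)).prodMk
        (((linDeriv w0 v.2.2.2.2.2.1).fun_neg).prodMk
        ((hasDerivAt_const _ _).prodMk (linDeriv sg v.2.2.2.2.2.2.2))))))))
  -- bracket 2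
  have goal2 : VLie Xh Xe (b, t, r, z0, z, w0, w, sg) = (-2:ℝ) • Xe (b, t, r, z0, z, w0, w, sg) := by
    simp only [VLie]
    rw [hfdXe, hfdXh]
    simp only [Xe, Xh]
    refine Prod.ext ?_ (Prod.ext ?_ (Prod.ext ?_ (Prod.ext ?_ (Prod.ext ?_ (Prod.ext ?_ (Prod.ext ?_ ?_))))))
    · funext a; simp
    · funext a; simp
    · simp
    · show (0:ℝ) - 2*1 = (-2:ℝ) • 1; norm_num
    · funext a; simp
    · simp
    · funext a; simp
    · show -w0 - w0 = (-2:ℝ) • w0; simp; ring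
  have ht3 : t + (0:ℝ) • (-t) = t := by simp
  have hne3 : cubic k (t + (0:ℝ) • (-t)) ≠ 0 := by simpa using hH0
  have hH3 : HasDerivAt (fun s : ℝ => cubic k (t + s • (-t))) (-3 * cubic k t) 0 := by
    have leaf : ∀ a b' c : Fin n, HasDerivAt (fun s : ℝ =>
        k a b' c * (t a + s * -t a) * (t b' + s * -t b') * (t c + s * -t c))
        ((-3) * (k a b' c * t a * t b' * t c)) 0 := fun a b' c =>
      hd_congr ((((hasDerivAt_const 0 (k a b' c)).fun_mul (linDeriv (t a) (-t a))).fun_mul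
        (linDeriv (t b') (-t b'))).fun_mul (linDeriv (t c) (-t c))) (by ring)
    exact hd_congr ((HasDerivAt.fun_sum fun a _ => HasDerivAt.fun_sum fun b' _ =>
      HasDerivAt.fun_sum fun c _ => leaf a b' c).const_mul (1/6))
      (by simp only [cubic, ← Finset.mul_sum]; ring)
  have hsumzw3 : HasDerivAt (fun s : ℝ => ∑ a, (z a + s * z a) * (w a + s * 0))
      (∑ a, z a * w a) 0 := by
    have leaf : ∀ a : Fin n, HasDerivAt (fun s : ℝ => (z a + s * z a) * (w a + s * 0))
        (z a * w a) 0 :=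
      fun a => hd_congr ((linDeriv (z a) (z a)).fun_mul (linDeriv (w a) 0)) (by ring)
    exact HasDerivAt.fun_sum fun a _ => leaf a
  have hsumbw3 : HasDerivAt (fun s : ℝ => ∑ a, (b a + s * -b a) * (w a + s * 0))
      ((-1) * ∑ a, b a * w a) 0 := by
    have leaf : ∀ a : Fin n, HasDerivAt (fun s : ℝ => (b a + s * -b a) * (w a + s * 0))
        ((-1) * (b a * w a)) 0 :=
      fun a => hd_congr ((linDeriv (b a) (-b a)).fun_mul (linDeriv (w a) 0)) (by ring)
    exact hd_congr (HasDerivAt.fun_sum fun a _ => leaf a) (by simp only [← Finset.mul_sum])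
  have hS3b3 : HasDerivAt (fun s : ℝ => ∑ a, ∑ b', ∑ c,
      k a b' c * (b a + s * -b a) * (b b' + s * -b b') * (b c + s * -b c))
      ((-3) * ∑ a, ∑ b', ∑ c, k a b' c * b a * b b' * b c) 0 := by
    have leaf : ∀ a b' c : Fin n, HasDerivAt (fun s : ℝ =>
        k a b' c * (b a + s * -b a) * (b b' + s * -b b') * (b c + s * -b c))
        ((-3) * (k a b' c * b a * b b' * b c)) 0 := fun a b' c =>
      hd_congr ((((hasDerivAt_const 0 (k a b' c)).fun_mul (linDeriv (b a) (-b a))).fun_mul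
        (linDeriv (b b') (-b b'))).fun_mul (linDeriv (b c) (-b c))) (by ring)
    exact hd_congr (HasDerivAt.fun_sum fun a _ => HasDerivAt.fun_sum fun b' _ =>
      HasDerivAt.fun_sum fun c _ => leaf a b' c) (by simp only [← Finset.mul_sum])
  have hS3z3 : HasDerivAt (fun s : ℝ => ∑ a, ∑ b', ∑ c,
      k a b' c * (z a + s * z a) * (z b' + s * z b') * (z c + s * z c))
      (3 * ∑ a, ∑ b', ∑ c, k a b' c * z a * z b' * z c) 0 := by
    have leaf : ∀ a b' c : Fin n, HasDerivAt (fun s : ℝ =>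
        k a b' c * (z a + s * z a) * (z b' + s * z b') * (z c + s * z c))
        (3 * (k a b' c * z a * z b' * z c)) 0 := fun a b' c =>
      hd_congr ((((hasDerivAt_const 0 (k a b' c)).fun_mul (linDeriv (z a) (z a))).fun_mul
        (linDeriv (z b') (z b'))).fun_mul (linDeriv (z c) (z c))) (by ring)
    exact hd_congr (HasDerivAt.fun_sum fun a _ => HasDerivAt.fun_sum fun b' _ =>
      HasDerivAt.fun_sum fun c _ => leaf a b' c) (by simp only [← Finset.mul_sum])
  have hMix3 : HasDerivAt (fun s : ℝ => ∑ a, ∑ b', ∑ c, k a b' c *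
      ((b a + s * -b a) * (b b' + s * -b b') * (z c + s * z c)/2
        - (b a + s * -b a) * (b b' + s * -b b') * (b c + s * -b c) * (z0 + s * (2*z0))/6))
      ((-1) * ∑ a, ∑ b', ∑ c, k a b' c * (b a * b b' * z c/2 - b a * b b' * b c * z0/6)) 0 := by
    have leaf : ∀ a b' c : Fin n, HasDerivAt (fun s : ℝ => k a b' c *
        ((b a + s * -b a) * (b b' + s * -b b') * (z c + s * z c)/2
          - (b a + s * -b a) * (b b' + s * -b b') * (b c + s * -b c) * (z0 + s * (2*z0))/6))
        ((-1) * (k a b' c * (b a * b b' * z c/2 - b a * b b' * b c * z0/6))) 0 := fun a b' c =>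
      hd_congr ((hasDerivAt_const 0 (k a b' c)).fun_mul
        (((((linDeriv (b a) (-b a)).fun_mul (linDeriv (b b') (-b b'))).fun_mul
            (linDeriv (z c) (z c))).div_const 2).fun_sub
         (((((linDeriv (b a) (-b a)).fun_mul (linDeriv (b b') (-b b'))).fun_mul
            (linDeriv (b c) (-b c))).fun_mul (linDeriv z0 (2*z0))).div_const 6))) (by ring)
    exact hd_congr (HasDerivAt.fun_sum fun a _ => HasDerivAt.fun_sum fun b' _ =>
      HasDerivAt.fun_sum fun c _ => leaf a b' c) (by simp only [← Finset.mul_sum])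
  -- components
  have h3c1 : ∀ a : Fin n, HasDerivAt (fun s : ℝ =>
      (z0 + s * (2*z0)) * (b a + s * -b a) - (z a + s * z a)) (z0 * b a - z a) 0 := fun a =>
    hd_congr (((linDeriv z0 (2*z0)).fun_mul (linDeriv (b a) (-b a))).fun_sub
      (linDeriv (z a) (z a))) (by ring)
  have h3c2 : ∀ a : Fin n, HasDerivAt (fun s : ℝ =>
      (z0 + s * (2*z0)) * (t a + s * -t a)) (z0 * t a) 0 :=
    fun a => hd_congr ((linDeriv z0 (2*z0)).fun_mul (linDeriv (t a) (-t a))) (by ring)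
  have h3c3 : HasDerivAt (fun s : ℝ => -(z0 + s * (2*z0)) * (r + s * r)) (3*(-z0*r)) 0 :=
    hd_congr (((linDeriv z0 (2*z0)).fun_neg).fun_mul (linDeriv r r)) (by ring)
  have h3c4 : HasDerivAt (fun s : ℝ =>
      2*(r + s * r)/cubic k (t + s • (-t)) - (z0 + s * (2*z0))^2)
      (4*(2*r/cubic k t - z0^2)) 0 :=
    hd_congr ((((hasDerivAt_const 0 2).fun_mul (linDeriv r r)).fun_div hH3 hne3).fun_sub
      ((linDeriv z0 (2*z0)).fun_pow 2)) (by
        simp only [ht3]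
        norm_num
        try field_simp
        try ring)
  have h3c5 : ∀ a : Fin n, HasDerivAt (fun s : ℝ =>
      2*(r + s * r)/cubic k (t + s • (-t)) * (b a + s * -b a)
        - (z0 + s * (2*z0)) * (z a + s * z a))
      (3*(2*r/cubic k t * b a - z0 * z a)) 0 := fun a =>
    hd_congr (((((hasDerivAt_const 0 2).fun_mul (linDeriv r r)).fun_div hH3 hne3).fun_mul
      (linDeriv (b a) (-b a))).fun_sub ((linDeriv z0 (2*z0)).fun_mul (linDeriv (z a) (z a)))) (by
        simp only [ht3, zero_mul, mul_zero, add_zero, zero_add]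
        field_simp
        ring)
  have h3c6 : HasDerivAt (fun s : ℝ =>
      (1/2)*((sg + s * sg) + ((z0 + s * (2*z0))*(w0 + s * -w0)
          + ∑ a, (z a + s * z a) * (w a + s * 0)))
        + ((r + s * r)/cubic k (t + s • (-t))) * (1/3) * ∑ a, ∑ b', ∑ c,
            k a b' c * (b a + s * -b a) * (b b' + s * -b b') * (b c + s * -b c))
      ((1/2)*(sg + (z0*w0 + ∑ a, z a * w a))
        + (r/cubic k t) * (1/3) * ∑ a, ∑ b', ∑ c, k a b' c * b a * b b' * b c) 0 :=
    hd_congr ((((linDeriv sg sg).fun_add (((linDeriv z0 (2*z0)).fun_mul (linDeriv w0 (-w0))).fun_add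
      hsumzw3)).const_mul (1/2)).fun_add
      ((((linDeriv r r).fun_div hH3 hne3).mul_const (1/3)).fun_mul hS3b3)) (by
        simp only [ht3, zero_mul, mul_zero, add_zero, zero_add]
        field_simp
        ring)
  have h3c7 : ∀ a : Fin n, HasDerivAt (fun s : ℝ =>
      (1/2) * ∑ b', ∑ c, k a b' c * ((z b' + s * z b') * (z c + s * z c)
        - 2 * (b b' + s * -b b') * (b c + s * -b c) * (r + s * r)/cubic k (t + s • (-t))))
      (2 * ((1/2) * ∑ b', ∑ c, k a b' c * (z b' * z c
        - 2 * b b' * b c * r/cubic k t))) 0 := by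
    intro a
    have leaf : ∀ b' c : Fin n, HasDerivAt (fun s : ℝ =>
        k a b' c * ((z b' + s * z b') * (z c + s * z c)
          - 2 * (b b' + s * -b b') * (b c + s * -b c) * (r + s * r)/cubic k (t + s • (-t))))
        (2 * (k a b' c * (z b' * z c - 2 * b b' * b c * r/cubic k t))) 0 := fun b' c =>
      hd_congr ((hasDerivAt_const 0 (k a b' c)).fun_mul (((linDeriv (z b') (z b')).fun_mul
        (linDeriv (z c) (z c))).fun_sub (((((hasDerivAt_const 0 2).fun_mul
          (linDeriv (b b') (-b b'))).fun_mul (linDeriv (b c) (-b c))).fun_mul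
          (linDeriv r r)).fun_div hH3 hne3))) (by
            simp only [ht3, zero_mul, mul_zero, add_zero, zero_add]
            field_simp
            ring)
    exact hd_congr ((HasDerivAt.fun_sum fun b' _ => HasDerivAt.fun_sum fun c _ =>
      leaf b' c).const_mul (1/2)) (by simp only [← Finset.mul_sum]; ring)
  have h3c8 : HasDerivAt (fun s : ℝ =>
      2*(r + s * r)/cubic k (t + s • (-t)) *
        (-(w0 + s * -w0) - (∑ a, (b a + s * -b a) * (w a + s * 0))
          - ∑ a, ∑ b', ∑ c, k a b' c *
              ((b a + s * -b a) * (b b' + s * -b b') * (z c + s * z c)/2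
                - (b a + s * -b a) * (b b' + s * -b b') * (b c + s * -b c) * (z0 + s * (2*z0))/6))
        - (z0 + s * (2*z0))/2 * ((sg + s * sg) - ((z0 + s * (2*z0))*(w0 + s * -w0)
            + ∑ a, (z a + s * z a) * (w a + s * 0)))
        + (1/6) * ∑ a, ∑ b', ∑ c, k a b' c * (z a + s * z a) * (z b' + s * z b') * (z c + s * z c))
      (3*(2*r/cubic k t *
          (-w0 - (∑ a, b a * w a)
            - ∑ a, ∑ b', ∑ c, k a b' c * (b a * b b' * z c/2 - b a * b b' * b c * z0/6))
        - z0/2 * (sg - (z0*w0 + ∑ a, z a * w a))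
        + (1/6) * ∑ a, ∑ b', ∑ c, k a b' c * z a * z b' * z c)) 0 := by
    have hfrac : HasDerivAt (fun s : ℝ => 2*(r + s * r)/cubic k (t + s • (-t)))
        (8*(r/cubic k t)) 0 :=
      hd_congr (((hasDerivAt_const 0 2).fun_mul (linDeriv r r)).fun_div hH3 hne3) (by
        simp only [ht3]; field_simp; try ring)
    have hG : HasDerivAt (fun s : ℝ => -(w0 + s * -w0)
        - (∑ a, (b a + s * -b a) * (w a + s * 0))
        - ∑ a, ∑ b', ∑ c, k a b' c *
            ((b a + s * -b a) * (b b' + s * -b b') * (z c + s * z c)/2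
              - (b a + s * -b a) * (b b' + s * -b b') * (b c + s * -b c) * (z0 + s * (2*z0))/6))
        (w0 + (∑ a, b a * w a)
          + ∑ a, ∑ b', ∑ c, k a b' c * (b a * b b' * z c/2 - b a * b b' * b c * z0/6)) 0 :=
      hd_congr ((((linDeriv w0 (-w0)).fun_neg).fun_sub hsumbw3).fun_sub hMix3) (by ring)
    have hT2 : HasDerivAt (fun s : ℝ => (z0 + s * (2*z0))/2 * ((sg + s * sg)
        - ((z0 + s * (2*z0))*(w0 + s * -w0) + ∑ a, (z a + s * z a) * (w a + s * 0))))
        (3*(z0/2 * (sg - (z0*w0 + ∑ a, z a * w a)))) 0 :=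
      hd_congr (((linDeriv z0 (2*z0)).div_const 2).fun_mul ((linDeriv sg sg).fun_sub
        (((linDeriv z0 (2*z0)).fun_mul (linDeriv w0 (-w0))).fun_add hsumzw3))) (by
          simp only [zero_mul, mul_zero, add_zero, zero_add]
          ring)
    exact hd_congr (((hfrac.fun_mul hG).fun_sub hT2).fun_add (hS3z3.const_mul (1/6))) (by
      simp only [ht3, zero_mul, mul_zero, add_zero, zero_add]
      ring)
  have hXfh : fderiv ℝ (Xf k) (b, t, r, z0, z, w0, w, sg) (Xh (b, t, r, z0, z, w0, w, sg))
      = ((fun a => z0 * b a - z a), (fun a => z0 * t a), 3*(-z0*r), 4*(2*r/cubic k t - z0^2),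
         (fun a => 3*(2*r/cubic k t * b a - z0 * z a)),
         (1/2)*(sg + (z0*w0 + ∑ a, z a * w a))
           + (r/cubic k t) * (1/3) * ∑ a, ∑ b', ∑ c, k a b' c * b a * b b' * b c,
         (fun a => 2 * ((1/2) * ∑ b', ∑ c, k a b' c * (z b' * z c
            - 2 * b b' * b c * r/cubic k t))),
         3*(2*r/cubic k t *
              (-w0 - (∑ a, b a * w a)
                - ∑ a, ∑ b', ∑ c, k a b' c * (b a * b b' * z c/2 - b a * b b' * b c * z0/6))
            - z0/2 * (sg - (z0*w0 + ∑ a, z a * w a))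
            + (1/6) * ∑ a, ∑ b', ∑ c, k a b' c * z a * z b' * z c)) :=
    fderiv_apply_eq hXfdiff (by
      exact (hasDerivAt_pi.mpr h3c1).prodMk ((hasDerivAt_pi.mpr h3c2).prodMk (h3c3.prodMk
        (h3c4.prodMk ((hasDerivAt_pi.mpr h3c5).prodMk (h3c6.prodMk
        ((hasDerivAt_pi.mpr h3c7).prodMk h3c8)))))))
  have goal3 : VLie Xh (Xf k) (b, t, r, z0, z, w0, w, sg)
      = (2:ℝ) • Xf k (b, t, r, z0, z, w0, w, sg) := by
    simp only [VLie]
    rw [hXfh, hfdXh]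
    simp only [Xf, Xh]
    refine Prod.ext ?_ (Prod.ext ?_ (Prod.ext ?_ (Prod.ext ?_ (Prod.ext ?_ (Prod.ext ?_ (Prod.ext ?_ ?_))))))
    · funext a; simp; try ring
    · funext a; simp; try ring
    · simp; try ring
    · simp; try ring
    · funext a; simp; try ring
    · simp; try ring
    · funext a; simp; try ring
    · simp; try ring
  exact ⟨goal1, goal2, goal3⟩

end
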